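/- Let G be a group and x, y ∈ G with o(x) = 2 and y conjugate to y⁻¹ in G (i.e. y^a = y⁻¹ for some a ∈ G). Then the generalized order of xy satisfies e(xy) ≤ 4. -/
import Mathlib


/-- The generalized order of `g`: the smallest positive `k` such that some product of
`k` conjugates of `g` equals the identity. -/
noncomputable def genOrder {G : Type*} [Group G] (g : G) : ℕ :=
  sInf {k | 0 < k ∧ ∃ l : List G, l.length = k ∧ (l.map fun x => x⁻¹ * g * x).prod = 1}

theorem stmt1 {G : Type*} [Group G] (x y : G)
    (hx : orderOf x = 2) (hy : ∃ a : G, a⁻¹ * y * a = y⁻¹) :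
    genOrder (x * y) ≤ 4 := by
  obtain ⟨a, ha⟩ := hy
  have hx2 : x * x = 1 := by
    have h := pow_orderOf_eq_one x
    rwa [hx, pow_two] at h
  apply Nat.sInf_le
  refine ⟨by norm_num, [1, y, a, y * a], rfl, ?_⟩
  have h1 : (x * y) * (y⁻¹ * (x * y) * y) = y * y := by
    have : (x * y) * (y⁻¹ * (x * y) * y) = (x * x) * (y * y) := by group
    rw [this, hx2, one_mul]
  have h2 : a⁻¹ * (y * y) * a = y⁻¹ * y⁻¹ := by
    have : a⁻¹ * (y * y) * a = (a⁻¹ * y * a) * (a⁻¹ * y * a) := by group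
    rw [this, ha]
  have h3 : (a⁻¹ * (x * y) * a) * ((y * a)⁻¹ * (x * y) * (y * a)) =
      a⁻¹ * ((x * y) * (y⁻¹ * (x * y) * y)) * a := by group
  simp only [List.map_cons, List.map_nil, List.prod_cons, List.prod_nil, mul_one]
  calc (1 : G)⁻¹ * (x * y) * (y⁻¹ * (x * y) * y * (a⁻¹ * (x * y) * a *
        ((y * a)⁻¹ * (x * y) * (y * a))))
      = ((x * y) * (y⁻¹ * (x * y) * y)) *
        ((a⁻¹ * (x * y) * a) * ((y * a)⁻¹ * (x * y) * (y * a))) := by group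
    _ = (y * y) * (a⁻¹ * ((x * y) * (y⁻¹ * (x * y) * y)) * a) := by rw [h3, h1]
    _ = (y * y) * (y⁻¹ * y⁻¹) := by simp only [h1, h2]
    _ = 1 := by group
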